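/- Let f : X → Y be a scheme morphism of finite presentation and let y ∈ Y be a point such that the fiber X_y is zero-dimensional. Then the fiber X_y is a finite set. -/

import Mathlib

open AlgebraicGeometry CategoryTheory CategoryTheory.Limits

/-- A Noetherian sober-ish (T0 suffices) space of Krull dimension zero is finite. -/
theorem finite_of_noetherianSpace_of_krullDim_zero (T : Type*) [TopologicalSpace T]
    [TopologicalSpace.NoetherianSpace T] [T0Space T]
    (h : topologicalKrullDim T = 0) : Finite T := by
  have key : ∀ x : T, irreducibleComponent x = closure {x} := by
    intro x
    have hsub : closure {x} ⊆ irreducibleComponent x :=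
      closure_minimal (Set.singleton_subset_iff.mpr mem_irreducibleComponent)
        isClosed_irreducibleComponent
    by_contra hne
    set a : TopologicalSpace.IrreducibleCloseds T :=
      ⟨closure {x}, isIrreducible_singleton.closure, isClosed_closure⟩
    set b : TopologicalSpace.IrreducibleCloseds T :=
      ⟨irreducibleComponent x, isIrreducible_irreducibleComponent,
        isClosed_irreducibleComponent⟩
    have hab : a < b := by
      refine lt_of_le_of_ne (SetLike.coe_subset_coe.mp hsub) (fun H => hne ?_)
      exact (congrArg (fun s : TopologicalSpace.IrreducibleCloseds T => (s : Set T)) H).symm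
    have hmin : ¬ IsMin b := fun H => hab.not_ge (H hab.le)
    have h0 : Order.height b ≠ 0 := fun H => hmin (Order.height_eq_zero.mp H)
    have hle : (Order.height b : WithBot ℕ∞) ≤ 0 := by
      rw [← h, topologicalKrullDim]
      exact Order.height_le_krullDim b
    have : Order.height b ≤ 0 := by exact_mod_cast hle
    exact h0 (le_antisymm this zero_le)
  have hfin : (irreducibleComponents T).Finite :=
    TopologicalSpace.NoetherianSpace.finite_irreducibleComponents
  have : Finite (irreducibleComponents T) := hfin
  refine Finite.of_injective
    (fun x : T => (⟨irreducibleComponent x,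
      irreducibleComponent_mem_irreducibleComponents x⟩ : irreducibleComponents T)) ?_
  intro x y hxy
  have : closure ({x} : Set T) = closure {y} := by
    have := congrArg Subtype.val hxy
    simpa [key] using this
  exact (inseparable_iff_closure_eq.mpr this).eq

/-- If `f : X ⟶ Y` is of finite presentation and the fiber over `y` is
zero-dimensional, then the fiber is a finite set. -/
theorem stmt11 {X Y : AlgebraicGeometry.Scheme} (f : X ⟶ Y)
    [LocallyOfFinitePresentation f] [QuasiCompact f] [QuasiSeparated f] (y : Y)
    (h : topologicalKrullDim
      (pullback f (Y.fromSpecResidueField y) : AlgebraicGeometry.Scheme) = 0) :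
    Finite (pullback f (Y.fromSpecResidueField y) : AlgebraicGeometry.Scheme) := by
  set P : AlgebraicGeometry.Scheme := pullback f (Y.fromSpecResidueField y)
  set g : P ⟶ Spec (Y.residueField y) := pullback.snd f (Y.fromSpecResidueField y)
  have hfp : LocallyOfFinitePresentation g :=
    haveI := locallyOfFinitePresentation_isStableUnderBaseChange
    inferInstance
  have hqc : QuasiCompact g := inferInstance
  have hcs : CompactSpace P := QuasiCompact.compactSpace_of_compactSpace g
  have hln : IsLocallyNoetherian P := by
    apply (isLocallyNoetherian_iff_of_affine_openCover (𝒰 := P.affineCover)).mpr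
    intro i
    have : LocallyOfFinitePresentation (P.affineCover.f i ≫ g) := inferInstance
    have hQ' : RingHom.FinitePresentation ((P.affineCover.f i ≫ g).appTop.hom) :=
      HasRingHomProperty.appTop (P := @LocallyOfFinitePresentation) _ this
    have hQ : RingHom.FiniteType ((P.affineCover.f i ≫ g).appTop.hom) :=
      RingHom.FiniteType.of_finitePresentation hQ'
    have : IsNoetherianRing Γ(Spec (Y.residueField y), ⊤) :=
      IsLocallyNoetherian.component_noetherian ⟨⊤, isAffineOpen_top _⟩
    letI : Algebra Γ(Spec (Y.residueField y), ⊤) Γ(P.affineCover.X i, ⊤) :=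
      ((P.affineCover.f i ≫ g).appTop.hom).toAlgebra
    haveI : Algebra.FiniteType Γ(Spec (Y.residueField y), ⊤) Γ(P.affineCover.X i, ⊤) := hQ
    exact Algebra.FiniteType.isNoetherianRing Γ(Spec (Y.residueField y), ⊤)
      Γ(P.affineCover.X i, ⊤)
  have hN : IsNoetherian P := ⟨⟩
  have : TopologicalSpace.NoetherianSpace P := inferInstance
  exact finite_of_noetherianSpace_of_krullDim_zero P h
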